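/- Let w_λ ∈ H¹(M) satisfy the weak equation ∫_M (∇w_λ, ∇v) dμ = μ(λ) ∫_M (f₀+λ) v e^{2w_λ} dμ for all v ∈ H¹(M), with Lagrange multipliers μ(λ) > 0, on a closed surface M of unit volume with f₀ smooth and non-constant. Suppose w_λ → 0 in H¹(M) and e^{2w_λ} → 1 in L² as λ ↑ λ_max = -f̄₀. Then μ(λ) → 0 as λ ↑ λ_max. -/

import Mathlib

open MeasureTheory Filter

theorem stmt16 {M : Type*} [MeasurableSpace M] [Nonempty M]
    (μ : Measure M) [IsProbabilityMeasure μ]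
    {H : Type*} [NormedAddCommGroup H] [InnerProductSpace ℝ H]
    (f₀ : M → ℝ) (hf₀m : Measurable f₀) (Cf : ℝ) (hCf : ∀ x, |f₀ x| ≤ Cf)
    (fbar : ℝ) (hfbar : fbar = ∫ x, f₀ x ∂μ)
    (hnc : ¬ f₀ =ᵐ[μ] fun _ => fbar)
    (hmean : fbar < 0)
    (w : ℝ → M → ℝ) (hwm : ∀ lam, Measurable (w lam))
    (W : ℝ → H) (T : (M → ℝ) → H) (muL : ℝ → ℝ)
    (hmuL : ∀ lam ∈ Set.Ioo 0 (-fbar), 0 < muL lam)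
    (heq : ∀ lam ∈ Set.Ioo 0 (-fbar), ∀ v : M → ℝ, Measurable v → (∀ x, |v x| ≤ 2 * Cf) →
      (inner ℝ (W lam) (T v) : ℝ)
        = muL lam * ∫ x, (f₀ x + lam) * v x * Real.exp (2 * w lam x) ∂μ)
    (hW : Tendsto (fun lam => ‖W lam‖) (nhdsWithin (-fbar) (Set.Iio (-fbar))) (nhds 0))
    (hL2 : Tendsto (fun lam => eLpNorm (fun x => Real.exp (2 * w lam x) - 1) 2 μ)
      (nhdsWithin (-fbar) (Set.Iio (-fbar))) (nhds 0)) :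
    Tendsto muL (nhdsWithin (-fbar) (Set.Iio (-fbar))) (nhds 0) := by
  set l := nhdsWithin (-fbar) (Set.Iio (-fbar)) with hl
  obtain ⟨x₀⟩ := ‹Nonempty M›
  have hCf0 : 0 ≤ Cf := le_trans (abs_nonneg _) (hCf x₀)
  -- integrability of bounded measurable functions
  have hintb : ∀ (g : M → ℝ) (C : ℝ), Measurable g → (∀ x, |g x| ≤ C) → Integrable g μ := by
    intro g C hg hgC
    exact ⟨hg.aestronglyMeasurable, HasFiniteIntegral.of_bounded (C := C) (ae_of_all _ hgC)⟩
  have hint_f : Integrable f₀ μ := hintb f₀ Cf hf₀m hCf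
  have hfbarle : |fbar| ≤ Cf := by
    rw [hfbar]
    calc |∫ x, f₀ x ∂μ| ≤ ∫ x, ‖f₀ x‖ ∂μ := by
            rw [← Real.norm_eq_abs]; exact norm_integral_le_integral_norm _
    _ = ∫ x, |f₀ x| ∂μ := by simp [Real.norm_eq_abs]
    _ ≤ ∫ _x, Cf ∂μ := integral_mono (hint_f.abs) (integrable_const _) (fun x => hCf x)
    _ = Cf := by simp
  set v : M → ℝ := fun x => f₀ x - fbar with hv
  have hv_meas : Measurable v := hf₀m.sub measurable_const
  have hv_bd : ∀ x, |v x| ≤ 2 * Cf := by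
    intro x
    calc |f₀ x - fbar| ≤ |f₀ x| + |fbar| := abs_sub _ _
    _ ≤ Cf + Cf := add_le_add (hCf x) hfbarle
    _ = 2 * Cf := by ring
  have hint_v : Integrable v μ := hintb v (2 * Cf) hv_meas hv_bd
  have hint_vv : Integrable (fun x => v x * v x) μ :=
    hintb _ ((2 * Cf) * (2 * Cf)) (hv_meas.mul hv_meas)
      (fun x => by rw [abs_mul]; exact mul_le_mul (hv_bd x) (hv_bd x) (abs_nonneg _) (by linarith))
  have hintv0 : ∫ x, v x ∂μ = 0 := by
    simp only [hv]
    rw [integral_sub hint_f (integrable_const _), integral_const]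
    simp [hfbar]
  set Var : ℝ := ∫ x, v x * v x ∂μ with hVar
  have hVar_pos : 0 < Var := by
    rcases lt_or_eq_of_le (integral_nonneg (f := fun x => v x * v x) (fun x => mul_self_nonneg (v x))) with h | h
    · exact h
    · exfalso
      have h0 : (fun x => v x * v x) =ᵐ[μ] 0 := by
        rw [← integral_eq_zero_iff_of_nonneg (fun x => mul_self_nonneg (v x)) hint_vv]
        exact h.symm
      apply hnc
      filter_upwards [h0] with x hx
      have : v x = 0 := by
        have := mul_self_eq_zero.mp hx
        exact this
      simpa [hv, sub_eq_zero] using this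
  -- A lam := inner
  set A : ℝ → ℝ := fun lam => (inner ℝ (W lam) (T v) : ℝ) with hA
  have hA0 : Tendsto A l (nhds 0) := by
    apply squeeze_zero_norm (fun lam => norm_inner_le_norm (W lam) (T v))
    simpa using hW.mul_const ‖T v‖
  set B : ℝ → ℝ := fun lam => ∫ x, (f₀ x + lam) * v x * Real.exp (2 * w lam x) ∂μ with hB
  set E : ℝ → ℝ := fun lam => ∫ x, (f₀ x + lam) * v x * (Real.exp (2 * w lam x) - 1) ∂μ with hE
  set ε : ℝ → ℝ := fun lam =>
    (eLpNorm (fun x => Real.exp (2 * w lam x) - 1) 2 μ).toReal with hεdef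
  have hε0 : Tendsto ε l (nhds 0) := by
    have := (ENNReal.tendsto_toReal (a := 0) (by simp)).comp hL2
    simpa [Function.comp_def] using this
  -- eventual facts
  have hev_mem : ∀ᶠ lam in l, lam ∈ Set.Ioo 0 (-fbar) := by
    have h1 : ∀ᶠ lam in l, lam < -fbar := eventually_mem_nhdsWithin
    have h2 : ∀ᶠ lam in l, 0 < lam :=
      nhdsWithin_le_nhds (eventually_gt_nhds (by linarith : (0:ℝ) < -fbar))
    filter_upwards [h1, h2] with lam ha hb using ⟨hb, ha⟩
  have hev_fin : ∀ᶠ lam in l,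
      eLpNorm (fun x => Real.exp (2 * w lam x) - 1) 2 μ < ⊤ :=
    hL2.eventually_lt_const (by simp)
  -- integrability of h := exp(2w)-1 when eLpNorm finite
  have hmemint : ∀ lam, eLpNorm (fun x => Real.exp (2 * w lam x) - 1) 2 μ < ⊤ →
      Integrable (fun x => Real.exp (2 * w lam x) - 1) μ := by
    intro lam hfin
    have hmes : AEStronglyMeasurable (fun x => Real.exp (2 * w lam x) - 1) μ :=
      (((hwm lam).const_mul 2).exp.sub measurable_const).aestronglyMeasurable
    have hmem2 : MemLp (fun x => Real.exp (2 * w lam x) - 1) 2 μ := ⟨hmes, hfin⟩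
    exact (hmem2.mono_exponent (by norm_num)).integrable le_rfl
  -- the key eventual decomposition and bound
  have hgb : ∀ lam ∈ Set.Ioo 0 (-fbar), ∀ x, |(f₀ x + lam) * v x| ≤ 4 * Cf ^ 2 := by
    intro lam hlam x
    have h1 : |f₀ x + lam| ≤ 2 * Cf := by
      have := hCf x
      have := abs_le.mp (hCf x)
      have hla : |lam| ≤ Cf := by
        rw [abs_of_pos hlam.1]
        calc lam ≤ -fbar := le_of_lt hlam.2
        _ = |fbar| := (abs_of_neg hmean).symm
        _ ≤ Cf := hfbarle
      calc |f₀ x + lam| ≤ |f₀ x| + |lam| := abs_add_le _ _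
      _ ≤ Cf + Cf := add_le_add (hCf x) hla
      _ = 2 * Cf := by ring
    calc |(f₀ x + lam) * v x| = |f₀ x + lam| * |v x| := abs_mul _ _
    _ ≤ (2 * Cf) * (2 * Cf) := mul_le_mul h1 (hv_bd x) (abs_nonneg _) (by linarith)
    _ = 4 * Cf ^ 2 := by ring
  have hEbd : ∀ᶠ lam in l, ‖E lam‖ ≤ 4 * Cf ^ 2 * ε lam := by
    filter_upwards [hev_mem, hev_fin] with lam hlam hfin
    have hinth : Integrable (fun x => Real.exp (2 * w lam x) - 1) μ := hmemint lam hfin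
    have hgm : Measurable fun x => (f₀ x + lam) * v x :=
      (hf₀m.add_const lam).mul hv_meas
    have hint_full : Integrable (fun x => (f₀ x + lam) * v x * (Real.exp (2 * w lam x) - 1)) μ := by
      apply hinth.bdd_mul hgm.aestronglyMeasurable
      exact ae_of_all _ (fun x => by rw [Real.norm_eq_abs]; exact hgb lam hlam x)
    have h1 : ‖E lam‖ ≤ ∫ x, 4 * Cf ^ 2 * |Real.exp (2 * w lam x) - 1| ∂μ := by
      rw [Real.norm_eq_abs]
      calc |E lam| ≤ ∫ x, |(f₀ x + lam) * v x * (Real.exp (2 * w lam x) - 1)| ∂μ := by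
              rw [← Real.norm_eq_abs]
              calc ‖E lam‖ ≤ ∫ x, ‖(f₀ x + lam) * v x * (Real.exp (2 * w lam x) - 1)‖ ∂μ :=
                  norm_integral_le_integral_norm _
                _ = ∫ x, |(f₀ x + lam) * v x * (Real.exp (2 * w lam x) - 1)| ∂μ := by
                  simp only [Real.norm_eq_abs]
        _ ≤ ∫ x, 4 * Cf ^ 2 * |Real.exp (2 * w lam x) - 1| ∂μ := by
              apply integral_mono hint_full.abs (hinth.abs.const_mul _)
              intro x
              simp only
              rw [abs_mul ((f₀ x + lam) * v x)]
              exact mul_le_mul_of_nonneg_right (hgb lam hlam x) (abs_nonneg _)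
    have h2 : ∫ x, |Real.exp (2 * w lam x) - 1| ∂μ ≤ ε lam := by
      have habs : ∫ x, |Real.exp (2 * w lam x) - 1| ∂μ
          = (eLpNorm (fun x => Real.exp (2 * w lam x) - 1) 1 μ).toReal := by
        rw [eLpNorm_one_eq_lintegral_enorm, ← integral_norm_eq_lintegral_enorm
          hinth.aestronglyMeasurable]
        simp [Real.norm_eq_abs]
      rw [habs]
      apply ENNReal.toReal_mono hfin.ne
      exact eLpNorm_le_eLpNorm_of_exponent_le (by norm_num) hinth.aestronglyMeasurable
    calc ‖E lam‖ ≤ ∫ x, 4 * Cf ^ 2 * |Real.exp (2 * w lam x) - 1| ∂μ := h1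
    _ = 4 * Cf ^ 2 * ∫ x, |Real.exp (2 * w lam x) - 1| ∂μ := integral_const_mul _ _
    _ ≤ 4 * Cf ^ 2 * ε lam := by
        apply mul_le_mul_of_nonneg_left h2 (by positivity)
  have hE0 : Tendsto E l (nhds 0) := by
    apply squeeze_zero_norm' hEbd
    simpa using hε0.const_mul (4 * Cf ^ 2)
  have hBdecomp : ∀ᶠ lam in l, B lam = Var + E lam := by
    filter_upwards [hev_mem, hev_fin] with lam hlam hfin
    have hinth : Integrable (fun x => Real.exp (2 * w lam x) - 1) μ := hmemint lam hfin
    have hgm : Measurable fun x => (f₀ x + lam) * v x :=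
      (hf₀m.add_const lam).mul hv_meas
    have hint_g : Integrable (fun x => (f₀ x + lam) * v x) μ :=
      hintb _ (4 * Cf ^ 2) hgm (hgb lam hlam)
    have hint_full : Integrable (fun x => (f₀ x + lam) * v x * (Real.exp (2 * w lam x) - 1)) μ := by
      apply hinth.bdd_mul hgm.aestronglyMeasurable
      exact ae_of_all _ (fun x => by rw [Real.norm_eq_abs]; exact hgb lam hlam x)
    have step1 : B lam = (∫ x, (f₀ x + lam) * v x ∂μ) + E lam := by
      simp only [hB, hE]
      rw [← integral_add hint_g hint_full]
      congr 1
      ext x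
      ring
    have step2 : ∫ x, (f₀ x + lam) * v x ∂μ = Var := by
      have : ∀ x, (f₀ x + lam) * v x = v x * v x + (fbar + lam) * v x := by
        intro x; simp only [hv]; ring
      rw [integral_congr_ae (ae_of_all _ this),
        integral_add hint_vv (hint_v.const_mul _), integral_const_mul, hintv0]
      simp [hVar]
    rw [step1, step2]
  have hB0 : Tendsto B l (nhds Var) := by
    apply Tendsto.congr' (hBdecomp.mono fun lam h => h.symm)
    simpa using tendsto_const_nhds.add hE0
  have hBne : ∀ᶠ lam in l, B lam ≠ 0 := by
    filter_upwards [hB0.eventually (eventually_gt_nhds (show Var / 2 < Var by linarith))] with lam h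
    intro h0
    rw [h0] at h
    linarith
  have heqAB : ∀ᶠ lam in l, A lam = muL lam * B lam := by
    filter_upwards [hev_mem] with lam hlam
    exact heq lam hlam v hv_meas hv_bd
  have hdiv : Tendsto (fun lam => A lam / B lam) l (nhds 0) := by
    have := hA0.div hB0 hVar_pos.ne'
    simp only [zero_div] at this; exact this
  apply hdiv.congr'
  filter_upwards [heqAB, hBne] with lam h1 h2
  rw [h1]
  field_simp
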